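/- With M = GL_n(ℤ_p) or M = SL_n(ℤ_p) and G ≤ M, the index i_k divides i_{k+1} for every k ≥ 1, and the sequence u_k = i_{k+1}/i_k of positive integers satisfies u_{k+1} ∣ u_k for every k ≥ 1 if p is odd, and for every k ≥ 2 if p = 2. -/

import Mathlib

set_option linter.unusedSectionVars false

open scoped MatrixGroups
open Subgroup

/-- The reduction map `GL_n(ℤ_p) → GL_n(ℤ/p^kℤ)` induced by entrywise reduction. -/
noncomputable def glRed (p : ℕ) [Fact p.Prime] (n k : ℕ) :
    GL (Fin n) ℤ_[p] →* GL (Fin n) (ZMod (p ^ k)) :=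
  Units.map ((PadicInt.toZModPow k).mapMatrix).toMonoidHom

/-- `i_k = [M_k : G_k]`, where `M_k` and `G_k` are the images of `M` and `G` in
`GL_n(ℤ/p^kℤ)`. -/
noncomputable def redIndex (p : ℕ) [Fact p.Prime] (n : ℕ)
    (M G : Subgroup (GL (Fin n) ℤ_[p])) (k : ℕ) : ℕ :=
  (Subgroup.map (glRed p n k) G).relIndex (Subgroup.map (glRed p n k) M)


open Subgroup

section GroupPrelim
variable {A B : Type*} [Group A] [Group B]

/-- index of image subgroups under a hom. -/
theorem relindex_map_eq (f : A →* B) {G M : Subgroup A} (h : G ≤ M) :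
    (G.map f).relIndex (M.map f) = (G ⊔ (f.ker ⊓ M)).relIndex M := by
  have h1 : (G.map f).subgroupOf (M.map f) = (G.subgroupOf M).map (f.subgroupMap M) := by
    ext x
    simp only [mem_subgroupOf, Subgroup.mem_map]
    constructor
    · rintro hx
      obtain ⟨g, hg, hgx⟩ := hx
      exact ⟨⟨g, h hg⟩, hg, Subtype.ext hgx⟩
    · rintro ⟨⟨g, hgM⟩, hg, rfl⟩
      exact ⟨g, hg, rfl⟩
  have hker : (f.subgroupMap M).ker = f.ker.subgroupOf M := by
    ext x
    simp only [MonoidHom.mem_ker, mem_subgroupOf]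
    constructor
    · intro hx
      have := congrArg (Subtype.val) hx
      exact this
    · intro hx
      exact Subtype.ext hx
  have hsurj : Function.Surjective (f.subgroupMap M) := f.subgroupMap_surjective M
  have : (G.map f).relIndex (M.map f) = ((G.subgroupOf M).map (f.subgroupMap M)).index := by
    rw [Subgroup.relIndex, h1]
  rw [this, Subgroup.index_map, (f.subgroupMap M).range_eq_top_of_surjective hsurj,
    Subgroup.index_top, mul_one, hker]
  have : f.ker.subgroupOf M = (f.ker ⊓ M).subgroupOf M := by
    rw [inf_subgroupOf_right]
  rw [this, ← subgroupOf_sup h inf_le_right]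
  rfl

/-- Second isomorphism style index identity, via cancellation. -/
theorem relindex_sup_of_normal (X N : Subgroup A) [N.Normal]
    (hc : (X ⊓ N).relIndex X ≠ 0) :
    X.relIndex (X ⊔ N) = (X ⊓ N).relIndex N := by
  have e1 : (X ⊓ N).relIndex X * X.relIndex (X ⊔ N) = (X ⊓ N).relIndex (X ⊔ N) :=
    relIndex_mul_relIndex _ _ _ inf_le_left le_sup_left
  have e2 : (X ⊓ N).relIndex N * N.relIndex (X ⊔ N) = (X ⊓ N).relIndex (X ⊔ N) :=
    relIndex_mul_relIndex _ _ _ inf_le_right le_sup_right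
  have e3 : N.relIndex (X ⊔ N) = N.relIndex X := relIndex_sup_right X N
  have e4 : N.relIndex X = (X ⊓ N).relIndex X := by
    rw [inf_comm, inf_relIndex_right]
  rw [e3, e4, mul_comm] at e2
  rw [← e2] at e1
  exact Nat.eq_of_mul_eq_mul_left (Nat.pos_of_ne_zero hc) e1

end GroupPrelim


namespace St10
variable (p : ℕ) [Fact p.Prime] (n : ℕ)

noncomputable def Gam (k : ℕ) : Subgroup (GL (Fin n) ℤ_[p]) := (glRed p n k).ker

lemma dvd_iff_toZModPow (k : ℕ) (x : ℤ_[p]) :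
    (p : ℤ_[p]) ^ k ∣ x ↔ PadicInt.toZModPow k x = 0 := by
  rw [← Ideal.mem_span_singleton, ← PadicInt.ker_toZModPow, RingHom.mem_ker]

lemma mem_Gam_iff (k : ℕ) (g : GL (Fin n) ℤ_[p]) :
    g ∈ Gam p n k ↔ ∀ i j, (p : ℤ_[p]) ^ k ∣ ((g : Matrix (Fin n) (Fin n) ℤ_[p]) - 1) i j := by
  rw [Gam, MonoidHom.mem_ker, Units.ext_iff]
  have h1 : ((glRed p n k g : GL (Fin n) (ZMod (p ^ k))) : Matrix (Fin n) (Fin n) (ZMod (p^k)))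
      = ((g : Matrix (Fin n) (Fin n) ℤ_[p])).map (PadicInt.toZModPow k) := rfl
  have key : ∀ i j : Fin n, (PadicInt.toZModPow k) ((1 : Matrix (Fin n) (Fin n) ℤ_[p]) i j)
      = (1 : Matrix (Fin n) (Fin n) (ZMod (p^k))) i j := by
    intro i j; rw [Matrix.one_apply, Matrix.one_apply]; split <;> simp
  rw [h1, show ((1 : GL (Fin n) (ZMod (p^k))) : Matrix (Fin n) (Fin n) (ZMod (p^k)))
      = (1 : Matrix (Fin n) (Fin n) (ZMod (p^k))) from rfl, ← Matrix.ext_iff]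
  apply forall_congr'; intro i; apply forall_congr'; intro j
  rw [Matrix.map_apply, Matrix.sub_apply, dvd_iff_toZModPow, map_sub, sub_eq_zero, key i j]

lemma Gam_anti {k l : ℕ} (h : k ≤ l) : Gam p n l ≤ Gam p n k := by
  intro g hg
  rw [mem_Gam_iff] at hg ⊢
  exact fun i j => dvd_trans (pow_dvd_pow _ h) (hg i j)

end St10

namespace St10
variable (p : ℕ) [Fact p.Prime] (n : ℕ)

lemma dvd_mul_entry {a b : ℤ_[p]} {A B : Matrix (Fin n) (Fin n) ℤ_[p]}
    (hA : ∀ i j, a ∣ A i j) (hB : ∀ i j, b ∣ B i j) :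
    ∀ i j, a * b ∣ (A * B) i j := by
  intro i j
  rw [Matrix.mul_apply]
  exact Finset.dvd_sum fun l _ => mul_dvd_mul (hA i l) (hB l j)

lemma dvd_pow_entry {a : ℤ_[p]} {A : Matrix (Fin n) (Fin n) ℤ_[p]}
    (hA : ∀ i j, a ∣ A i j) : ∀ (t : ℕ) (i j : Fin n), a ^ t ∣ (A ^ t) i j := by
  intro t
  induction t with
  | zero => intro i j; simp
  | succ t ih =>
    intro i j
    rw [pow_succ, pow_succ]
    exact dvd_mul_entry p n (fun i j => ih i j) hA i j

/-- The "logarithm" homomorphism on the congruence subgroup `Γ_{m+1}`,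
with values in matrices mod `p^(m+2)`. -/
noncomputable def lam (m : ℕ) :
    (Gam p n (m+1)) →* Multiplicative (Matrix (Fin n) (Fin n) (ZMod (p^(m+2)))) where
  toFun g := Multiplicative.ofAdd
    ((((g : GL (Fin n) ℤ_[p]) : Matrix (Fin n) (Fin n) ℤ_[p]) - 1).map (PadicInt.toZModPow (m+2)))
  map_one' := by
    simp only [OneMemClass.coe_one, Units.val_one, sub_self]
    rw [Matrix.map_zero _ (map_zero _)]
    rfl
  map_mul' g h := by
    set A := ((g : GL (Fin n) ℤ_[p]) : Matrix (Fin n) (Fin n) ℤ_[p]) with hA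
    set B := ((h : GL (Fin n) ℤ_[p]) : Matrix (Fin n) (Fin n) ℤ_[p]) with hB
    have hgv : (((g * h : Gam p n (m+1)) : GL (Fin n) ℤ_[p]) : Matrix (Fin n) (Fin n) ℤ_[p])
        = A * B := rfl
    have hg := (mem_Gam_iff p n (m+1) _).mp g.2
    have hh := (mem_Gam_iff p n (m+1) _).mp h.2
    have hprod : ∀ i j, (p : ℤ_[p]) ^ (m+2) ∣ ((A - 1) * (B - 1)) i j := by
      intro i j
      refine dvd_trans (pow_dvd_pow (p : ℤ_[p]) (by omega : m+2 ≤ (m+1)+(m+1))) ?_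
      rw [pow_add]
      exact dvd_mul_entry p n hg hh i j
    show Multiplicative.ofAdd
        ((((g * h : Gam p n (m+1)) : GL (Fin n) ℤ_[p]) : Matrix (Fin n) (Fin n) ℤ_[p]) - 1).map
          (PadicInt.toZModPow (m+2)) = _
    rw [← ofAdd_add]
    apply congrArg Multiplicative.ofAdd
    have hmat : A * B - 1 = (A - 1) + (B - 1) + (A - 1) * (B - 1) := by noncomm_ring
    rw [hgv, hmat]
    ext i j
    simp only [Matrix.map_apply, Matrix.add_apply, map_add, ← hA, ← hB]
    rw [(dvd_iff_toZModPow p (m+2) _).mp (hprod i j), add_zero]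

lemma lam_apply (m : ℕ) (g : Gam p n (m+1)) :
    (lam p n m g).toAdd
      = (((g : GL (Fin n) ℤ_[p]) : Matrix (Fin n) (Fin n) ℤ_[p]) - 1).map
          (PadicInt.toZModPow (m+2)) := rfl

lemma ker_lam (m : ℕ) :
    (lam p n m).ker = (Gam p n (m+2)).subgroupOf (Gam p n (m+1)) := by
  ext g
  rw [MonoidHom.mem_ker, mem_subgroupOf, mem_Gam_iff]
  show Multiplicative.ofAdd
      ((((g : GL (Fin n) ℤ_[p]) : Matrix (Fin n) (Fin n) ℤ_[p]) - 1).map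
        (PadicInt.toZModPow (m+2)))
    = (1 : Multiplicative (Matrix (Fin n) (Fin n) (ZMod (p^(m+2))))) ↔ _
  rw [show (1 : Multiplicative (Matrix (Fin n) (Fin n) (ZMod (p^(m+2)))))
      = Multiplicative.ofAdd 0 from rfl, Multiplicative.ofAdd.apply_eq_iff_eq, ← Matrix.ext_iff]
  apply forall_congr'; intro i; apply forall_congr'; intro j
  rw [Matrix.map_apply, dvd_iff_toZModPow, Matrix.zero_apply]

end St10

namespace St10
variable (p : ℕ) [Fact p.Prime] (n : ℕ)

/-- "Multiplication by p" from `ZMod (p^(m+2))` to `ZMod (p^(m+3))`. -/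
noncomputable def psi0 (m : ℕ) : ZMod (p^(m+2)) →+ ZMod (p^(m+3)) :=
  ZMod.lift (p^(m+2)) ⟨p • Int.castAddHom (ZMod (p^(m+3))), by
    simp only [AddMonoidHom.smul_apply, Int.coe_castAddHom, nsmul_eq_mul]
    push_cast
    rw [← pow_succ']
    exact_mod_cast ZMod.natCast_self (p^(m+3))⟩

lemma psi0_intCast (m : ℕ) (a : ℤ) :
    psi0 p m ((a : ℤ) : ZMod (p^(m+2))) = (p : ZMod (p^(m+3))) * (a : ZMod (p^(m+3))) := by
  rw [psi0, ZMod.lift_coe]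
  simp [nsmul_eq_mul]

lemma psi0_injective (m : ℕ) : Function.Injective (psi0 p m) := by
  have hp : (p : ℤ) ≠ 0 := by exact_mod_cast (Fact.out : p.Prime).ne_zero
  intro x y hxy
  obtain ⟨a, rfl⟩ := ZMod.intCast_surjective x
  obtain ⟨b, rfl⟩ := ZMod.intCast_surjective y
  rw [psi0_intCast, psi0_intCast, ← sub_eq_zero, ← mul_sub, ← Int.cast_sub,
    show ((p : ZMod (p^(m+3))) : ZMod (p^(m+3))) = ((p : ℤ) : ZMod (p^(m+3))) by push_cast; rfl,
    ← Int.cast_mul, ZMod.intCast_zmod_eq_zero_iff_dvd] at hxy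
  rw [← sub_eq_zero, ← Int.cast_sub, ZMod.intCast_zmod_eq_zero_iff_dvd]
  push_cast at hxy ⊢
  rw [show ((p:ℤ))^(m+3) = p * p^(m+2) by ring] at hxy
  exact (mul_dvd_mul_iff_left hp).mp hxy

/-- Entrywise multiplication-by-p on matrices, as a hom of multiplicative groups. -/
noncomputable def Psi (m : ℕ) :
    Multiplicative (Matrix (Fin n) (Fin n) (ZMod (p^(m+2)))) →*
      Multiplicative (Matrix (Fin n) (Fin n) (ZMod (p^(m+3)))) :=
  AddMonoidHom.toMultiplicative ((psi0 p m).mapMatrix)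

lemma Psi_apply (m : ℕ) (x : Multiplicative (Matrix (Fin n) (Fin n) (ZMod (p^(m+2))))) :
    (Psi p n m x).toAdd = (x.toAdd).map (psi0 p m) := rfl

lemma Psi_injective (m : ℕ) : Function.Injective (Psi p n m) := by
  intro x y hxy
  have : (x.toAdd).map (psi0 p m) = (y.toAdd).map (psi0 p m) := hxy
  have h2 : x.toAdd = y.toAdd := by
    ext i j
    exact psi0_injective p m (congrFun (congrFun (congrArg (fun M => M) this) i) j)
  exact h2

lemma ker_Psi (m : ℕ) : (Psi p n m).ker = ⊥ :=
  (Psi p n m).ker_eq_bot_iff.mpr (Psi_injective p n m)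

end St10

namespace St10
variable (p : ℕ) [Fact p.Prime] (n : ℕ)

lemma finiteGL (k : ℕ) : Finite (GL (Fin n) (ZMod (p^k))) := by
  haveI : NeZero (p^k) := ⟨pow_ne_zero _ (Fact.out : p.Prime).ne_zero⟩
  infer_instance

/-- The image of `H ∩ Γ_{m+1}` under `lam`. -/
noncomputable def lieImg (H : Subgroup (GL (Fin n) ℤ_[p])) (m : ℕ) :
    Subgroup (Multiplicative (Matrix (Fin n) (Fin n) (ZMod (p^(m+2))))) :=
  Subgroup.map (lam p n m) (H.subgroupOf (Gam p n (m+1)))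

lemma lieImg_mono {H K : Subgroup (GL (Fin n) ℤ_[p])} (h : H ≤ K) (m : ℕ) :
    lieImg p n H m ≤ lieImg p n K m :=
  Subgroup.map_mono (fun _ hx => h hx)

lemma map_lam_inf_eq (M G : Subgroup (GL (Fin n) ℤ_[p])) (hGM : G ≤ M) (m : ℕ) :
    Subgroup.map (lam p n m)
      (((G ⊔ (Gam p n (m+2) ⊓ M)) ⊓ (Gam p n (m+1) ⊓ M)).subgroupOf (Gam p n (m+1)))
      = lieImg p n G m := by
  set Γ := Gam p n (m+1)
  set Γ' := Gam p n (m+2)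
  set N' := Γ' ⊓ M
  apply le_antisymm
  · rintro x ⟨ξ, hξ, rfl⟩
    simp only [SetLike.mem_coe, Subgroup.mem_subgroupOf] at hξ
    have hξX := hξ.1
    have hξΓ := hξ.2.1
    have hξM := hξ.2.2
    -- decompose in M
    haveI : ((N').subgroupOf M).Normal := by
      have : (N').subgroupOf M = ((glRed p n (m+2)).comp M.subtype).ker := by
        rw [show N' = M ⊓ Γ' by rw [inf_comm], Subgroup.inf_subgroupOf_left,
          ← MonoidHom.comap_ker]
        rfl
      rw [this]; exact MonoidHom.normal_ker _
    have hμ : (⟨(ξ : GL (Fin n) ℤ_[p]), hξM⟩ : M) ∈ G.subgroupOf M ⊔ N'.subgroupOf M := by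
      rw [← Subgroup.subgroupOf_sup hGM inf_le_right]
      exact hξX
    rw [← SetLike.mem_coe, Subgroup.mul_normal] at hμ
    obtain ⟨a, ha, b, hb, hab⟩ := hμ
    have haG : (a : GL (Fin n) ℤ_[p]) ∈ G := ha
    have hbN' : (b : GL (Fin n) ℤ_[p]) ∈ N' := hb
    have hbΓ' : (b : GL (Fin n) ℤ_[p]) ∈ Γ' := hbN'.1
    have hbΓ : (b : GL (Fin n) ℤ_[p]) ∈ Γ := Gam_anti p n (by omega) hbΓ'
    have hval : (a : GL (Fin n) ℤ_[p]) * (b : GL (Fin n) ℤ_[p]) = (ξ : GL (Fin n) ℤ_[p]) :=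
      congrArg Subtype.val hab
    have haΓ : (a : GL (Fin n) ℤ_[p]) ∈ Γ := by
      have : (a : GL (Fin n) ℤ_[p]) = (ξ : GL (Fin n) ℤ_[p]) * ((b : GL (Fin n) ℤ_[p]))⁻¹ := by
        rw [← hval]; group
      rw [this]
      exact Γ.mul_mem hξΓ (Γ.inv_mem hbΓ)
    refine ⟨⟨(a : GL (Fin n) ℤ_[p]), haΓ⟩, haG, ?_⟩
    have hζker : (⟨(b : GL (Fin n) ℤ_[p]), hbΓ⟩ : Γ) ∈ (lam p n m).ker := by
      rw [ker_lam, Subgroup.mem_subgroupOf]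
      exact hbΓ'
    have hsplit : ξ = (⟨(a : GL (Fin n) ℤ_[p]), haΓ⟩ : Γ) * ⟨(b : GL (Fin n) ℤ_[p]), hbΓ⟩ :=
      Subtype.ext (by rw [← hval]; rfl)
    rw [hsplit, map_mul, MonoidHom.mem_ker.mp hζker, mul_one]
  · apply Subgroup.map_mono
    intro ξ hξ
    rw [Subgroup.mem_subgroupOf] at hξ ⊢
    exact ⟨Subgroup.mem_sup_left hξ, ξ.2, hGM hξ⟩

lemma w_eq (M G : Subgroup (GL (Fin n) ℤ_[p])) (hGM : G ≤ M) (m : ℕ) :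
    (G ⊔ (Gam p n (m+2) ⊓ M)).relIndex (G ⊔ (Gam p n (m+1) ⊓ M))
      = (lieImg p n G m).relIndex (lieImg p n M m) := by
  set Γ := Gam p n (m+1)
  set Γ' := Gam p n (m+2)
  set N := Γ ⊓ M with hN
  set N' := Γ' ⊓ M with hN'
  set X := G ⊔ N' with hX
  have hN'N : N' ≤ N := inf_le_inf_right M (Gam_anti p n (by omega))
  have hXM : X ≤ M := sup_le hGM inf_le_right
  have hNM : N ≤ M := inf_le_right
  have hXNM : X ⊔ N ≤ M := sup_le hXM hNM
  have step0 : G ⊔ N = X ⊔ N := by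
    rw [hX, sup_assoc, sup_of_le_right hN'N]
  rw [step0]
  -- transport into M
  haveI hnorm : ((N).subgroupOf M).Normal := by
    have : (N).subgroupOf M = ((glRed p n (m+1)).comp M.subtype).ker := by
      rw [show N = M ⊓ Γ by rw [inf_comm], Subgroup.inf_subgroupOf_left, ← MonoidHom.comap_ker]
      rfl
    rw [this]; exact MonoidHom.normal_ker _
  have hc : ((X.subgroupOf M) ⊓ (N.subgroupOf M)).relIndex (X.subgroupOf M) ≠ 0 := by
    rw [inf_comm, Subgroup.inf_relIndex_right]
    have : (N).subgroupOf M = ((glRed p n (m+1)).comp M.subtype).ker := by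
      rw [show N = M ⊓ Γ by rw [inf_comm], Subgroup.inf_subgroupOf_left, ← MonoidHom.comap_ker]
      rfl
    rw [this, Subgroup.relIndex_ker]
    haveI := finiteGL p n (m+1)
    exact Nat.card_pos.ne'
  have step1 : X.relIndex (X ⊔ N) = (X ⊓ N).relIndex N := by
    rw [← Subgroup.relIndex_subgroupOf hXNM,
      Subgroup.subgroupOf_sup hXM hNM,
      relindex_sup_of_normal _ _ hc,
      show X.subgroupOf M ⊓ N.subgroupOf M = (X ⊓ N).subgroupOf M from by
        ext y; simp [Subgroup.mem_subgroupOf],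
      Subgroup.relIndex_subgroupOf hNM]
  rw [step1]
  -- transport into Γ
  have hNΓ : N ≤ Γ := inf_le_left
  have hXNΓ : X ⊓ N ≤ Γ := le_trans inf_le_right hNΓ
  rw [← Subgroup.relIndex_subgroupOf hNΓ]
  -- apply claim1 for lam
  have hle : (X ⊓ N).subgroupOf Γ ≤ N.subgroupOf Γ :=
    fun ξ hξ => by
      rw [Subgroup.mem_subgroupOf] at hξ ⊢; exact hξ.2
  have hker : (lam p n m).ker ⊓ (N.subgroupOf Γ) ≤ (X ⊓ N).subgroupOf Γ := by
    intro ξ hξ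
    rw [Subgroup.mem_inf, ker_lam, Subgroup.mem_subgroupOf, Subgroup.mem_subgroupOf] at hξ
    obtain ⟨h1, h2⟩ := hξ
    rw [Subgroup.mem_subgroupOf]
    exact ⟨Subgroup.mem_sup_right (⟨h1, h2.2⟩ : (ξ:GL (Fin n) ℤ_[p]) ∈ N'), h2⟩
  have := relindex_map_eq (lam p n m) hle
  rw [sup_of_le_left hker] at this
  rw [← this]
  congr 1
  · exact map_lam_inf_eq p n M G hGM m
  · rw [lieImg, show N.subgroupOf Γ = M.subgroupOf Γ by
      rw [hN, Subgroup.inf_subgroupOf_left]]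

end St10

namespace St10
variable (p : ℕ) [Fact p.Prime] (n : ℕ)

lemma psi0_toZModPow (m : ℕ) (z : ℤ_[p]) :
    psi0 p m (PadicInt.toZModPow (m+2) z) = PadicInt.toZModPow (m+3) ((p:ℤ_[p]) * z) := by
  set a := z.appr (m+2) with ha
  have hspec : z - (a : ℤ_[p]) ∈ Ideal.span {(p:ℤ_[p])^(m+2)} := PadicInt.appr_spec (m+2) z
  obtain ⟨c, hc⟩ := Ideal.mem_span_singleton.mp hspec
  have h1 : PadicInt.toZModPow (m+2) z = ((a : ℕ) : ZMod (p^(m+2))) := by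
    have : PadicInt.toZModPow (m+2) (z - (a:ℤ_[p])) = 0 := by
      rw [← RingHom.mem_ker, PadicInt.ker_toZModPow]; exact hspec
    rw [map_sub, sub_eq_zero] at this
    rw [this, map_natCast]
  have h2 : PadicInt.toZModPow (m+3) ((p:ℤ_[p]) * z) = ((p * a : ℕ) : ZMod (p^(m+3))) := by
    have hker : (p:ℤ_[p]) * z - ((p * a : ℕ) : ℤ_[p]) ∈ Ideal.span {(p:ℤ_[p])^(m+3)} := by
      rw [Ideal.mem_span_singleton]
      push_cast
      have : (p:ℤ_[p]) * z - (p:ℤ_[p]) * (a:ℤ_[p]) = (p:ℤ_[p]) * (z - (a:ℤ_[p])) := by ring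
      rw [this, hc]
      exact ⟨c, by ring⟩
    have : PadicInt.toZModPow (m+3) ((p:ℤ_[p]) * z - ((p * a : ℕ) : ℤ_[p])) = 0 := by
      rw [← RingHom.mem_ker, PadicInt.ker_toZModPow]; exact hker
    rw [map_sub, sub_eq_zero] at this
    rw [this, map_natCast]
  rw [h1, h2, show ((a:ℕ) : ZMod (p^(m+2))) = ((a : ℤ) : ZMod (p^(m+2))) by push_cast; rfl,
    psi0_intCast]
  push_cast
  ring

lemma pow_p_key (m : ℕ) (hcond : Odd p ∨ (p = 2 ∧ 1 ≤ m)) (g : GL (Fin n) ℤ_[p])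
    (hg : g ∈ Gam p n (m+1)) :
    g^p ∈ Gam p n (m+2) ∧
    ∀ i j, (p:ℤ_[p])^(m+3) ∣
      (((g^p : GL (Fin n) ℤ_[p]) : Matrix (Fin n) (Fin n) ℤ_[p]) - 1
        - p • (((g : GL (Fin n) ℤ_[p]) : Matrix (Fin n) (Fin n) ℤ_[p]) - 1)) i j := by
  classical
  set E : Matrix (Fin n) (Fin n) ℤ_[p] := ((g : GL (Fin n) ℤ_[p]) : Matrix (Fin n) (Fin n) ℤ_[p]) - 1 with hE
  have hEdvd : ∀ i j, (p:ℤ_[p])^(m+1) ∣ E i j := (mem_Gam_iff p n (m+1) g).mp hg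
  obtain ⟨q, hq⟩ : ∃ q, p = q + 2 := ⟨p - 2, by have := (Fact.out : p.Prime).two_le; omega⟩
  have hval : ((g^p : GL (Fin n) ℤ_[p]) : Matrix (Fin n) (Fin n) ℤ_[p]) = (E + 1)^p := by
    rw [Units.val_pow_eq_pow_val]
    congr 1
    rw [hE]; abel
  have hbin : (E + 1)^p = ∑ j ∈ Finset.range (p+1), p.choose j • E^j := by
    rw [(Commute.one_right E).add_pow]
    apply Finset.sum_congr rfl
    intro j _
    rw [one_pow, mul_one, ← nsmul_eq_mul']
  have hsum : ((g^p : GL (Fin n) ℤ_[p]) : Matrix (Fin n) (Fin n) ℤ_[p]) - 1 - p • E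
      = ∑ j ∈ Finset.range (q+1), p.choose (j+2) • E^(j+2) := by
    rw [hval, hbin]
    rw [show p + 1 = (q+2)+1 by omega, Finset.sum_range_succ', Finset.sum_range_succ']
    have e0 : p.choose 0 • E^0 = (1 : Matrix (Fin n) (Fin n) ℤ_[p]) := by simp
    have e1 : p.choose (0+1) • E^(0+1) = p • E := by
      simp [Nat.choose_one_right]
    rw [e0, e1]
    have : ∀ j ∈ Finset.range (q+1), p.choose (j+1+1) • E^(j+1+1) = p.choose (j+2) • E^(j+2) := by
      intro j _; norm_num
    rw [Finset.sum_congr rfl this]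
    abel
  have hterm : ∀ j ∈ Finset.range (q+1), ∀ i l,
      (p:ℤ_[p])^(m+3) ∣ (p.choose (j+2) • E^(j+2)) i l := by
    intro j hj i l
    rw [Finset.mem_range] at hj
    rw [Matrix.smul_apply, nsmul_eq_mul]
    have hEpow : ((p:ℤ_[p])^(m+1))^(j+2) ∣ (E^(j+2)) i l := dvd_pow_entry p n hEdvd (j+2) i l
    by_cases hjp : j + 2 < p
    · -- p divides the binomial coefficient
      obtain ⟨c, hc⟩ := (Fact.out : p.Prime).dvd_choose_self (by omega) hjp
      have h1 : (p:ℤ_[p])^(2*(m+1)) ∣ (E^(j+2)) i l := by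
        refine dvd_trans ?_ hEpow
        rw [← pow_mul]
        exact pow_dvd_pow _ (by nlinarith : 2*(m+1) ≤ (m+1)*(j+2))
      obtain ⟨d, hd⟩ := h1
      refine ⟨(p:ℤ_[p])^m * (c:ℤ_[p]) * d, ?_⟩
      rw [hc, hd]
      push_cast
      ring
    · -- here j + 2 = p
      have hjp2 : j + 2 = p := by omega
      have hle : m + 3 ≤ (m+1)*(j+2) := by
        rcases hcond with hodd | ⟨hp2, hm⟩
        · have hp3 : 3 ≤ p := by
            have h2 := (Fact.out : p.Prime).two_le
            rcases Nat.odd_iff.mp hodd with h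
            omega
          nlinarith
        · nlinarith
      refine Dvd.dvd.mul_left ?_ _
      refine dvd_trans ?_ hEpow
      rw [← pow_mul]
      exact pow_dvd_pow _ hle
  constructor
  · rw [mem_Gam_iff]
    intro i l
    have hx : ((g^p : GL (Fin n) ℤ_[p]) : Matrix (Fin n) (Fin n) ℤ_[p]) - 1
        = (∑ j ∈ Finset.range (q+1), p.choose (j+2) • E^(j+2)) + p • E := by
      rw [← hsum]; abel
    rw [hx, Matrix.add_apply, Matrix.sum_apply]
    apply dvd_add
    · refine Finset.dvd_sum fun j hj => ?_
      exact dvd_trans (pow_dvd_pow _ (by omega : m+2 ≤ m+3)) (hterm j hj i l)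
    · rw [Matrix.smul_apply, nsmul_eq_mul]
      obtain ⟨e, he⟩ := hEdvd i l
      exact ⟨e, by rw [he, pow_succ]; ring⟩
  · intro i l
    rw [hsum, Matrix.sum_apply]
    exact Finset.dvd_sum fun j hj => hterm j hj i l

end St10

namespace St10
variable (p : ℕ) [Fact p.Prime] (n : ℕ)

lemma lam_entry (m : ℕ) (ξ : Gam p n (m+1)) (i j : Fin n) :
    (lam p n m ξ).toAdd i j
      = PadicInt.toZModPow (m+2) ((((ξ : GL (Fin n) ℤ_[p]) : Matrix (Fin n) (Fin n) ℤ_[p]) - 1) i j) := rfl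

lemma mapPsi_lieImg_le (G : Subgroup (GL (Fin n) ℤ_[p])) (m : ℕ)
    (hcond : Odd p ∨ (p = 2 ∧ 1 ≤ m)) :
    Subgroup.map (Psi p n m) (lieImg p n G m) ≤ lieImg p n G (m+1) := by
  rintro x hx
  rw [Subgroup.mem_map] at hx
  obtain ⟨y, hy, rfl⟩ := hx
  rw [lieImg, Subgroup.mem_map] at hy
  obtain ⟨ξ, hξ, rfl⟩ := hy
  rw [Subgroup.mem_subgroupOf] at hξ
  obtain ⟨hmem2, hdvd⟩ := pow_p_key p n m hcond ((ξ : GL (Fin n) ℤ_[p])) ξ.2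
  refine ⟨⟨(ξ : GL (Fin n) ℤ_[p])^p, hmem2⟩, ?_, ?_⟩
  · exact G.pow_mem hξ p
  · apply Multiplicative.toAdd.injective
    rw [Psi_apply]
    ext i j
    rw [Matrix.map_apply, lam_entry, lam_entry, psi0_toZModPow]
    rw [← sub_eq_zero, ← map_sub, ← dvd_iff_toZModPow]
    have := hdvd i j
    rw [Matrix.sub_apply, Matrix.smul_apply, nsmul_eq_mul] at this
    convert this using 2

end St10

namespace St10
variable (p : ℕ) [Fact p.Prime] (n : ℕ)

lemma isUnit_one_add_p_mul (z : ℤ_[p]) : IsUnit (1 + (p:ℤ_[p]) * z) := by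
  by_contra h
  have h1 : ‖1 + (p:ℤ_[p]) * z‖ < 1 := by
    have h0 : (1 + (p:ℤ_[p]) * z) ∈ nonunits ℤ_[p] := mem_nonunits_iff.mpr h
    exact PadicInt.mem_nonunits.mp h0
  have h2 : ‖(p:ℤ_[p]) * z‖ < 1 := by
    rw [norm_mul]
    calc ‖(p:ℤ_[p])‖ * ‖z‖ ≤ ‖(p:ℤ_[p])‖ * 1 := by
          exact mul_le_mul_of_nonneg_left z.norm_le_one (norm_nonneg _)
      _ = (p:ℝ)⁻¹ := by rw [mul_one, PadicInt.norm_p]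
      _ < 1 := by
          rw [inv_lt_one_iff₀]
          right
          exact_mod_cast (Fact.out : p.Prime).one_lt
  have h4 := PadicInt.nonarchimedean (1 + (p:ℤ_[p]) * z) (-((p:ℤ_[p]) * z))
  rw [show (1 + (p:ℤ_[p]) * z) + (-((p:ℤ_[p]) * z)) = 1 by ring, norm_one, norm_neg] at h4
  have := max_lt h1 h2
  linarith [le_trans h4 (le_of_lt this)]

/-- Characterization of the image of the full congruence subgroup. -/
lemma lieImg_top_iff (m : ℕ) (x : Multiplicative (Matrix (Fin n) (Fin n) (ZMod (p^(m+2))))) :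
    x ∈ lieImg p n ⊤ m ↔ ∀ i j, (p : ZMod (p^(m+2)))^(m+1) ∣ x.toAdd i j := by
  constructor
  · rintro ⟨ξ, -, rfl⟩ i j
    obtain ⟨e, he⟩ := (mem_Gam_iff p n (m+1) _).mp ξ.2 i j
    rw [lam_entry, he, map_mul, map_pow, map_natCast]
    exact Dvd.intro _ rfl
  · intro h
    choose y hy using h
    set Y : Matrix (Fin n) (Fin n) ℤ_[p] := fun i j => (((y i j).val : ℕ) : ℤ_[p]) with hY
    set r : ℤ_[p] := (p:ℤ_[p])^(m+1) with hr
    set A : Matrix (Fin n) (Fin n) ℤ_[p] := 1 + r • Y with hA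
    obtain ⟨e, he⟩ : ∃ e : ℤ_[p], A.det = 1 + Y.trace * r + e * r^2 :=
      ⟨_, by rw [hA]; exact Matrix.det_one_add_smul r Y⟩
    have hdet : IsUnit A.det := by
      rw [he, show (1:ℤ_[p]) + Y.trace * r + e * r^2
          = 1 + (p:ℤ_[p]) * ((p:ℤ_[p])^m * Y.trace + e * ((p:ℤ_[p])^m * r)) by rw [hr]; ring]
      exact isUnit_one_add_p_mul p _
    have hunit : IsUnit A := (Matrix.isUnit_iff_isUnit_det A).mpr hdet
    set u : GL (Fin n) ℤ_[p] := hunit.unit with hu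
    have huval : (u : Matrix (Fin n) (Fin n) ℤ_[p]) = A := hunit.unit_spec
    have humem : u ∈ Gam p n (m+1) := by
      rw [mem_Gam_iff]
      intro i j
      rw [huval, hA]
      have : (1 + r • Y - 1 : Matrix (Fin n) (Fin n) ℤ_[p]) i j = r * Y i j := by
        rw [show (1 + r • Y - 1 : Matrix (Fin n) (Fin n) ℤ_[p]) = r • Y by abel, Matrix.smul_apply,
          smul_eq_mul]
      rw [this, hr]
      exact Dvd.intro _ rfl
    refine ⟨⟨u, humem⟩, trivial, ?_⟩
    apply Multiplicative.toAdd.injective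
    ext i j
    rw [lam_entry]
    have : ((u : Matrix (Fin n) (Fin n) ℤ_[p]) - 1) i j = r * Y i j := by
      rw [huval, hA, show (1 + r • Y - 1 : Matrix (Fin n) (Fin n) ℤ_[p]) = r • Y by abel,
        Matrix.smul_apply, smul_eq_mul]
    rw [this, map_mul, hr, map_pow, map_natCast, hY]
    show (p : ZMod (p^(m+2)))^(m+1) * (PadicInt.toZModPow (m+2) (((y i j).val : ℕ) : ℤ_[p])) = _
    rw [map_natCast, ZMod.natCast_rightInverse (y i j), ← hy i j]

end St10

namespace St10
variable (p : ℕ) [Fact p.Prime] (n : ℕ)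

lemma trace_map_eq (m : ℕ) (E : Matrix (Fin n) (Fin n) ℤ_[p]) :
    Matrix.trace (E.map (PadicInt.toZModPow (m+2))) = PadicInt.toZModPow (m+2) (Matrix.trace E) := by
  rw [Matrix.trace, Matrix.trace, map_sum]
  exact Finset.sum_congr rfl fun i _ => rfl

/-- Characterization of the image of the special-linear congruence subgroup. -/
lemma lieImg_sl_iff (hn : 1 ≤ n) (m : ℕ)
    (x : Multiplicative (Matrix (Fin n) (Fin n) (ZMod (p^(m+2))))) :
    x ∈ lieImg p n (Matrix.GeneralLinearGroup.det :
        GL (Fin n) ℤ_[p] →* ℤ_[p]ˣ).ker m ↔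
      ((∀ i j, (p : ZMod (p^(m+2)))^(m+1) ∣ x.toAdd i j) ∧ Matrix.trace x.toAdd = 0) := by
  have hp0 : (p:ℤ_[p]) ≠ 0 := Nat.cast_ne_zero.mpr (Fact.out : p.Prime).ne_zero
  constructor
  · rintro ⟨ξ, hξ, rfl⟩
    simp only [SetLike.mem_coe, Subgroup.mem_subgroupOf, MonoidHom.mem_ker] at hξ
    have hdet1 : Matrix.det ((ξ : GL (Fin n) ℤ_[p]) : Matrix (Fin n) (Fin n) ℤ_[p]) = 1 := by
      have := congrArg Units.val hξ
      rwa [Matrix.GeneralLinearGroup.val_det_apply, Units.val_one] at this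
    have hEdvd := (mem_Gam_iff p n (m+1) _).mp ξ.2
    constructor
    · intro i j
      obtain ⟨e, he⟩ := hEdvd i j
      rw [lam_entry, he, map_mul, map_pow, map_natCast]
      exact Dvd.intro _ rfl
    · -- trace condition
      set E : Matrix (Fin n) (Fin n) ℤ_[p] :=
        ((ξ : GL (Fin n) ℤ_[p]) : Matrix (Fin n) (Fin n) ℤ_[p]) - 1 with hE
      set r : ℤ_[p] := (p:ℤ_[p])^(m+1) with hr
      have hr0 : r ≠ 0 := pow_ne_zero _ hp0
      choose B hB using hEdvd
      set Bx : Matrix (Fin n) (Fin n) ℤ_[p] := Matrix.of B with hBxdef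
      have hEB : E = r • Bx := by
        ext i j; rw [Matrix.smul_apply, smul_eq_mul]; exact hB i j
      obtain ⟨e, he⟩ : ∃ e : ℤ_[p], (1 + r • Bx).det = 1 + Bx.trace * r + e * r^2 :=
        ⟨_, Matrix.det_one_add_smul r Bx⟩
      have hval : ((ξ : GL (Fin n) ℤ_[p]) : Matrix (Fin n) (Fin n) ℤ_[p]) = 1 + r • Bx := by
        rw [← hEB, hE]; abel
      rw [hval, he] at hdet1
      have htr : Bx.trace = -(e * r) := by
        have h2 : r * (Bx.trace + e * r) = 0 := by linear_combination hdet1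
        rcases mul_eq_zero.mp h2 with h3 | h3
        · exact absurd h3 hr0
        · exact eq_neg_of_add_eq_zero_left h3
      have htrE : Matrix.trace E = -(e * r^2) := by
        rw [hEB, Matrix.trace_smul, smul_eq_mul, htr]; ring
      have hdvdtr : (p:ℤ_[p])^(m+2) ∣ Matrix.trace E := by
        rw [htrE, hr]
        exact ⟨-(e * (p:ℤ_[p])^m), by ring⟩
      show Matrix.trace ((lam p n m ξ).toAdd) = 0
      rw [lam_apply, trace_map_eq]
      exact (dvd_iff_toZModPow p (m+2) _).mp hdvdtr
  · rintro ⟨hdvd, htr0⟩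
    choose y hy using hdvd
    set Y : Matrix (Fin n) (Fin n) ℤ_[p] := fun i j => (((y i j).val : ℕ) : ℤ_[p]) with hY
    set r : ℤ_[p] := (p:ℤ_[p])^(m+1) with hr
    set A : Matrix (Fin n) (Fin n) ℤ_[p] := 1 + r • Y with hA
    have hyv : ∀ i j, (((y i j).val : ℕ) : ZMod (p^(m+2))) = y i j := fun i j =>
      ZMod.natCast_rightInverse (y i j)
    set S : ℕ := ∑ i, (y i i).val with hS
    have htrx : (((p:ℕ)^(m+1) * S : ℕ) : ZMod (p^(m+2))) = 0 := by
      have h1 : Matrix.trace x.toAdd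
          = ((p:ZMod (p^(m+2)))^(m+1)) * ((S:ℕ) : ZMod (p^(m+2))) := by
        rw [Matrix.trace, hS]
        push_cast
        rw [Finset.mul_sum]
        refine Finset.sum_congr rfl fun i _ => ?_
        rw [show Matrix.diag x.toAdd i = x.toAdd i i from rfl, hy i i, hyv i i]
      rw [← htr0, h1]
      push_cast
      ring
    have hpS : (p:ℕ) ∣ S := by
      have hd : (p:ℕ)^(m+2) ∣ (p:ℕ)^(m+1) * S := (ZMod.natCast_eq_zero_iff _ _).mp htrx
      rw [pow_succ] at hd
      exact (Nat.mul_dvd_mul_iff_left (pow_pos (Fact.out : p.Prime).pos (m+1))).mp hd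
    obtain ⟨S', hS'⟩ := hpS
    have htrY : Y.trace = ((S:ℕ) : ℤ_[p]) := by
      rw [Matrix.trace, hS]
      push_cast
      rfl
    obtain ⟨e, he⟩ : ∃ e : ℤ_[p], A.det = 1 + Y.trace * r + e * r^2 :=
      ⟨_, by rw [hA]; exact Matrix.det_one_add_smul r Y⟩
    set w : ℤ_[p] := ((S':ℕ) : ℤ_[p]) + e * (p:ℤ_[p])^m with hw
    have hdetA : A.det = 1 + (p:ℤ_[p])^(m+2) * w := by
      rw [he, htrY, hS', hw, hr]
      push_cast
      ring
    have hdet : IsUnit A.det := by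
      rw [hdetA, show (1:ℤ_[p]) + (p:ℤ_[p])^(m+2)*w
        = 1 + (p:ℤ_[p]) * ((p:ℤ_[p])^(m+1)*w) by ring]
      exact isUnit_one_add_p_mul p _
    set u₀ : ℤ_[p]ˣ := hdet.unit with hu₀
    have hu₀v : (u₀ : ℤ_[p]) = A.det := hdet.unit_spec
    have hbeq : (u₀ : ℤ_[p]) = 1 + (p:ℤ_[p])^(m+2) * w := hu₀v.trans hdetA
    set i0 : Fin n := ⟨0, hn⟩ with hi0
    set D : Matrix (Fin n) (Fin n) ℤ_[p] :=
      Matrix.diagonal (Function.update (fun _ => (1:ℤ_[p])) i0 ((u₀⁻¹ : ℤ_[p]ˣ) : ℤ_[p])) with hD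
    have hdetD : D.det = ((u₀⁻¹:ℤ_[p]ˣ):ℤ_[p]) := by
      rw [hD, Matrix.det_diagonal, Finset.prod_update_of_mem (Finset.mem_univ i0)]
      simp
    set Bm : Matrix (Fin n) (Fin n) ℤ_[p] := A * D with hBm
    have hdetB : Bm.det = 1 := by
      rw [hBm, Matrix.det_mul, hdetD, ← hu₀v]
      exact u₀.mul_inv
    have hunitB : IsUnit Bm := (Matrix.isUnit_iff_isUnit_det Bm).mpr (hdetB ▸ isUnit_one)
    set u : GL (Fin n) ℤ_[p] := hunitB.unit with hu
    have huval : (u : Matrix (Fin n) (Fin n) ℤ_[p]) = Bm := hunitB.unit_spec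
    have hDdvd : ∀ i j, (p:ℤ_[p])^(m+2) ∣ (D - 1) i j := by
      intro i j
      rw [Matrix.sub_apply, hD]
      by_cases hij : i = j
      · subst hij
        rw [Matrix.diagonal_apply_eq, Matrix.one_apply_eq]
        by_cases hii : i = i0
        · subst hii
          rw [Function.update_self]
          refine ⟨-(((u₀⁻¹:ℤ_[p]ˣ):ℤ_[p]) * w), ?_⟩
          have h1 : ((u₀⁻¹:ℤ_[p]ˣ):ℤ_[p]) * (u₀:ℤ_[p]) = 1 := u₀.inv_mul
          linear_combination h1 - ((u₀⁻¹:ℤ_[p]ˣ):ℤ_[p]) * hbeq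
        · rw [Function.update_of_ne hii]
          simp
      · rw [Matrix.diagonal_apply_ne _ hij, Matrix.one_apply_ne hij]
        simp
    have hAD : ∀ i j, (p:ℤ_[p])^(m+2) ∣ (A * (D - 1)) i j := by
      intro i j
      have := dvd_mul_entry p n (fun i j => one_dvd (A i j)) hDdvd i j
      rwa [one_mul] at this
    have hB1 : Bm - 1 = (A - 1) + A * (D - 1) := by rw [hBm]; noncomm_ring
    have hA1 : A - 1 = r • Y := by rw [hA]; abel
    have hentry : ∀ i j, ((u : Matrix (Fin n) (Fin n) ℤ_[p]) - 1) i j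
        = r * Y i j + (A * (D - 1)) i j := by
      intro i j
      have : (u : Matrix (Fin n) (Fin n) ℤ_[p]) - 1 = Bm - 1 := by rw [huval]
      rw [this, hB1, Matrix.add_apply, hA1, Matrix.smul_apply, smul_eq_mul]
    have hu_memGam : u ∈ Gam p n (m+1) := by
      rw [mem_Gam_iff]
      intro i j
      rw [hentry i j]
      apply dvd_add
      · exact Dvd.intro _ rfl
      · exact dvd_trans (pow_dvd_pow _ (by omega : m+1 ≤ m+2)) (hAD i j)
    refine ⟨⟨u, hu_memGam⟩, ?_, ?_⟩
    · show u ∈ (Matrix.GeneralLinearGroup.det : GL (Fin n) ℤ_[p] →* ℤ_[p]ˣ).ker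
      rw [MonoidHom.mem_ker]
      apply Units.ext
      rw [Matrix.GeneralLinearGroup.val_det_apply, Units.val_one]
      rw [show ((u : GL (Fin n) ℤ_[p]) : Matrix (Fin n) (Fin n) ℤ_[p]) = Bm from huval]
      exact hdetB
    · apply Multiplicative.toAdd.injective
      ext i j
      rw [lam_entry, hentry i j, map_add, (dvd_iff_toZModPow p (m+2) _).mp (hAD i j), add_zero,
        map_mul, hr, map_pow, map_natCast]
      show (p : ZMod (p^(m+2)))^(m+1) * (PadicInt.toZModPow (m+2) ((((y i j).val : ℕ)) : ℤ_[p])) = _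
      rw [map_natCast, hyv i j, ← hy i j]

end St10

namespace St10
variable (p : ℕ) [Fact p.Prime] (n : ℕ)

lemma psi0_shift (m : ℕ) (a : ℤ) :
    psi0 p m ((p:ZMod (p^(m+2)))^(m+1) * (a : ZMod (p^(m+2))))
      = (p:ZMod (p^(m+3)))^(m+2) * (a : ZMod (p^(m+3))) := by
  rw [show (p:ZMod (p^(m+2)))^(m+1) * (a : ZMod (p^(m+2)))
      = (((p^(m+1) * a : ℤ)) : ZMod (p^(m+2))) by push_cast; ring, psi0_intCast]
  push_cast
  ring

lemma mapPsi_top (m : ℕ) :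
    Subgroup.map (Psi p n m) (lieImg p n ⊤ m) = lieImg p n ⊤ (m+1) := by
  apply le_antisymm
  · rintro x hx
    rw [Subgroup.mem_map] at hx
    obtain ⟨y, hy, rfl⟩ := hx
    rw [lieImg_top_iff] at hy
    rw [lieImg_top_iff]
    intro i j
    obtain ⟨c, hc⟩ := hy i j
    obtain ⟨a, rfl⟩ := ZMod.intCast_surjective c
    have h1 : (Psi p n m y).toAdd i j = psi0 p m (y.toAdd i j) := rfl
    rw [h1, hc, psi0_shift]
    exact Dvd.intro _ rfl
  · intro x hx
    rw [lieImg_top_iff] at hx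
    choose t ht using hx
    set y : Matrix (Fin n) (Fin n) (ZMod (p^(m+2))) :=
      Matrix.of fun i j => (p:ZMod (p^(m+2)))^(m+1) * (((t i j).val : ℕ) : ZMod (p^(m+2))) with hy
    rw [Subgroup.mem_map]
    refine ⟨Multiplicative.ofAdd y, ?_, ?_⟩
    · rw [lieImg_top_iff]
      intro i j
      exact Dvd.intro _ rfl
    · apply Multiplicative.toAdd.injective
      ext i j
      have h1 : (Psi p n m (Multiplicative.ofAdd y)).toAdd i j = psi0 p m (y i j) := rfl
      rw [h1]
      show psi0 p m ((p:ZMod (p^(m+2)))^(m+1) * (((t i j).val : ℕ) : ZMod (p^(m+2)))) = x.toAdd i j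
      rw [show ((((t i j).val : ℕ)) : ZMod (p^(m+2))) = (((t i j).val : ℤ) : ZMod (p^(m+2))) by
        push_cast; rfl, psi0_shift]
      rw [show (((t i j).val : ℤ) : ZMod (p^(m+3))) = (((t i j).val : ℕ) : ZMod (p^(m+3))) by
        push_cast; rfl]
      rw [ZMod.natCast_rightInverse (t i j)]
      exact (ht i j).symm

end St10

namespace St10
variable (p : ℕ) [Fact p.Prime] (n : ℕ)

lemma mapPsi_sl (hn : 1 ≤ n) (m : ℕ) :
    Subgroup.map (Psi p n m)
        (lieImg p n (Matrix.GeneralLinearGroup.det : GL (Fin n) ℤ_[p] →* ℤ_[p]ˣ).ker m)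
      = lieImg p n (Matrix.GeneralLinearGroup.det : GL (Fin n) ℤ_[p] →* ℤ_[p]ˣ).ker (m+1) := by
  apply le_antisymm
  · rintro x hx
    rw [Subgroup.mem_map] at hx
    obtain ⟨y, hy, rfl⟩ := hx
    rw [lieImg_sl_iff p n hn] at hy
    obtain ⟨hdvd, htr⟩ := hy
    rw [lieImg_sl_iff p n hn]
    constructor
    · intro i j
      obtain ⟨c, hc⟩ := hdvd i j
      obtain ⟨a, rfl⟩ := ZMod.intCast_surjective c
      have h1 : (Psi p n m y).toAdd i j = psi0 p m (y.toAdd i j) := rfl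
      rw [h1, hc, psi0_shift]
      exact Dvd.intro _ rfl
    · have h2 : Matrix.trace ((Psi p n m y).toAdd) = psi0 p m (Matrix.trace y.toAdd) := by
        rw [Matrix.trace, Matrix.trace, map_sum]
        exact Finset.sum_congr rfl fun i _ => rfl
      rw [h2, htr, map_zero]
  · intro x hx
    rw [lieImg_sl_iff p n hn] at hx
    obtain ⟨hdvd, htr⟩ := hx
    choose t ht using hdvd
    set y : Matrix (Fin n) (Fin n) (ZMod (p^(m+2))) :=
      Matrix.of fun i j => (p:ZMod (p^(m+2)))^(m+1) * (((t i j).val : ℕ) : ZMod (p^(m+2))) with hy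
    -- trace of x gives p ∣ S
    set S : ℕ := ∑ i, (t i i).val with hS
    have htvS : ∀ i j, (((t i j).val : ℕ) : ZMod (p^(m+3))) = t i j := fun i j =>
      ZMod.natCast_rightInverse (t i j)
    have htrx : (((p:ℕ)^(m+2) * S : ℕ) : ZMod (p^(m+3))) = 0 := by
      have h1 : Matrix.trace x.toAdd
          = ((p:ZMod (p^(m+3)))^(m+2)) * ((S:ℕ) : ZMod (p^(m+3))) := by
        rw [Matrix.trace, hS]
        push_cast
        rw [Finset.mul_sum]
        refine Finset.sum_congr rfl fun i _ => ?_
        rw [show Matrix.diag x.toAdd i = x.toAdd i i from rfl, ht i i, htvS i i]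
      rw [← htr, h1]
      push_cast
      ring
    have hpS : (p:ℕ) ∣ S := by
      have hd : (p:ℕ)^(m+3) ∣ (p:ℕ)^(m+2) * S := (ZMod.natCast_eq_zero_iff _ _).mp htrx
      rw [pow_succ] at hd
      exact (Nat.mul_dvd_mul_iff_left (pow_pos (Fact.out : p.Prime).pos (m+2))).mp hd
    obtain ⟨S', hS'⟩ := hpS
    rw [Subgroup.mem_map]
    refine ⟨Multiplicative.ofAdd y, ?_, ?_⟩
    · rw [lieImg_sl_iff p n hn]
      constructor
      · intro i j
        exact Dvd.intro _ rfl
      · show Matrix.trace y = 0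
        have h1 : Matrix.trace y
            = ((p:ZMod (p^(m+2)))^(m+1)) * ((S:ℕ) : ZMod (p^(m+2))) := by
          rw [Matrix.trace, hS]
          push_cast
          rw [Finset.mul_sum]
          exact Finset.sum_congr rfl fun i _ => rfl
        rw [h1, hS']
        push_cast
        rw [show ((p:ZMod (p^(m+2)))^(m+1)) * ((p:ZMod (p^(m+2))) * ((S':ℕ) : ZMod (p^(m+2))))
            = ((p:ZMod (p^(m+2)))^(m+2)) * ((S':ℕ) : ZMod (p^(m+2))) by ring]
        rw [show ((p:ZMod (p^(m+2)))^(m+2)) = (((p^(m+2) : ℕ)) : ZMod (p^(m+2))) by push_cast; rfl,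
          ZMod.natCast_self]
        ring
    · apply Multiplicative.toAdd.injective
      ext i j
      have h1 : (Psi p n m (Multiplicative.ofAdd y)).toAdd i j = psi0 p m (y i j) := rfl
      rw [h1]
      show psi0 p m ((p:ZMod (p^(m+2)))^(m+1) * (((t i j).val : ℕ) : ZMod (p^(m+2)))) = x.toAdd i j
      rw [show ((((t i j).val : ℕ)) : ZMod (p^(m+2))) = (((t i j).val : ℤ) : ZMod (p^(m+2))) by
        push_cast; rfl, psi0_shift]
      rw [show (((t i j).val : ℤ) : ZMod (p^(m+3))) = (((t i j).val : ℕ) : ZMod (p^(m+3))) by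
        push_cast; rfl]
      rw [htvS i j]
      exact (ht i j).symm

end St10

namespace St10
variable (p : ℕ) [Fact p.Prime] (n : ℕ)

lemma redIndex_ne_zero (M G : Subgroup (GL (Fin n) ℤ_[p])) (k : ℕ) :
    redIndex p n M G k ≠ 0 := by
  haveI := finiteGL p n k
  show ((Subgroup.map (glRed p n k) G).subgroupOf (Subgroup.map (glRed p n k) M)).index ≠ 0
  exact Subgroup.index_ne_zero_of_finite

lemma step_dvd (hn : 1 ≤ n) (M G : Subgroup (GL (Fin n) ℤ_[p]))
    (hM : M = ⊤ ∨
      M = (Matrix.GeneralLinearGroup.det : GL (Fin n) ℤ_[p] →* ℤ_[p]ˣ).ker)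
    (hGM : G ≤ M) (m : ℕ) (hcond : Odd p ∨ (p = 2 ∧ 1 ≤ m)) :
    (lieImg p n G (m+1)).relIndex (lieImg p n M (m+1))
      ∣ (lieImg p n G m).relIndex (lieImg p n M m) := by
  have h1 := relindex_map_eq (Psi p n m) (lieImg_mono p n hGM m)
  rw [ker_Psi] at h1
  simp only [bot_inf_eq, sup_bot_eq] at h1
  have h2 : Subgroup.map (Psi p n m) (lieImg p n M m) = lieImg p n M (m+1) := by
    rcases hM with rfl | rfl
    · exact mapPsi_top p n m
    · exact mapPsi_sl p n hn m
  have h3 : Subgroup.map (Psi p n m) (lieImg p n G m) ≤ lieImg p n G (m+1) :=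
    mapPsi_lieImg_le p n G m hcond
  have h4 : lieImg p n G (m+1) ≤ lieImg p n M (m+1) := lieImg_mono p n hGM (m+1)
  rw [← h1, h2]
  exact Dvd.intro_left _ (Subgroup.relIndex_mul_relIndex _ _ _ h3 h4)

end St10

theorem statement_10 (p : ℕ) [Fact p.Prime] (n : ℕ) (hn : 1 ≤ n)
    (M G : Subgroup (GL (Fin n) ℤ_[p]))
    (hM : M = ⊤ ∨
      M = (Matrix.GeneralLinearGroup.det : GL (Fin n) ℤ_[p] →* ℤ_[p]ˣ).ker)
    (hGM : G ≤ M) :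
    (∀ k : ℕ, 1 ≤ k → redIndex p n M G k ∣ redIndex p n M G (k + 1)) ∧
    (∀ k : ℕ, (Odd p ∧ 1 ≤ k) ∨ (p = 2 ∧ 2 ≤ k) →
      redIndex p n M G (k + 2) / redIndex p n M G (k + 1) ∣
        redIndex p n M G (k + 1) / redIndex p n M G k) := by
  have hredEq : ∀ k, redIndex p n M G k = (G ⊔ (St10.Gam p n k ⊓ M)).relIndex M :=
    fun k => relindex_map_eq (glRed p n k) hGM
  have hHle : ∀ k l, k ≤ l →
      (G ⊔ (St10.Gam p n l ⊓ M)) ≤ (G ⊔ (St10.Gam p n k ⊓ M)) := fun k l h =>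
    sup_le le_sup_left (le_trans (inf_le_inf_right M (St10.Gam_anti p n h)) le_sup_right)
  have hHM : ∀ k, (G ⊔ (St10.Gam p n k ⊓ M)) ≤ M := fun k => sup_le hGM inf_le_right
  have hkey : ∀ k, redIndex p n M G (k+1)
      = (G ⊔ (St10.Gam p n (k+1) ⊓ M)).relIndex (G ⊔ (St10.Gam p n k ⊓ M))
        * redIndex p n M G k := by
    intro k
    rw [hredEq k, hredEq (k+1)]
    exact (Subgroup.relIndex_mul_relIndex _ _ _ (hHle k (k+1) (by omega)) (hHM k)).symm
  constructor
  · intro k _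
    rw [hkey k]
    exact dvd_mul_left _ _
  · intro k hcond
    have hk1 : 1 ≤ k := by rcases hcond with ⟨_, h⟩ | ⟨_, h⟩ <;> omega
    obtain ⟨m, rfl⟩ : ∃ m, k = m + 1 := ⟨k - 1, by omega⟩
    have hcond' : Odd p ∨ (p = 2 ∧ 1 ≤ m) := by
      rcases hcond with ⟨h, _⟩ | ⟨h, h2⟩
      · exact Or.inl h
      · exact Or.inr ⟨h, by omega⟩
    have hnz1 : redIndex p n M G (m+1) ≠ 0 := St10.redIndex_ne_zero p n M G (m+1)
    have hnz2 : redIndex p n M G (m+2) ≠ 0 := St10.redIndex_ne_zero p n M G (m+2)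
    have hq1 : redIndex p n M G (m+2) / redIndex p n M G (m+1)
        = (St10.lieImg p n G m).relIndex (St10.lieImg p n M m) := by
      have h := hkey (m+1)
      simp only [Nat.add_assoc] at h
      norm_num at h
      rw [h, Nat.mul_div_cancel _ (Nat.pos_of_ne_zero hnz1)]
      exact St10.w_eq p n M G hGM m
    have hq2 : redIndex p n M G (m+3) / redIndex p n M G (m+2)
        = (St10.lieImg p n G (m+1)).relIndex (St10.lieImg p n M (m+1)) := by
      have h := hkey (m+2)
      simp only [Nat.add_assoc] at h
      norm_num at h
      rw [h, Nat.mul_div_cancel _ (Nat.pos_of_ne_zero hnz2)]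
      have h2 := St10.w_eq p n M G hGM (m+1)
      simp only [Nat.add_assoc] at h2
      norm_num at h2
      exact h2
    have hgoal := St10.step_dvd p n hn M G hM hGM m hcond'
    rw [← hq1, ← hq2] at hgoal
    simp only [Nat.add_assoc] at hgoal ⊢
    norm_num at hgoal ⊢
    exact hgoal
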